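/- On R^6 with coordinates (x1,...,x6), define P with nonzero entries P^{14} = p14, P^{23} = p23, P^{34} = p34 + p14 x2, P^{36} = p36, P^{46} = -p14 x5, P^{56} = p56, and P' with nonzero entries P'^{14} = c44 p14 x4/p34, P'^{23} = b32 x2, P'^{34} = c44 x4 + c44 p14 x2 x4/p34, P'^{46} = -c44 p14 x4 x5/p34, P'^{56} = e65 x5, where all parameters are real constants with p34 ≠ 0. Then P and P' are compatible Poisson structures: [P,P] = [P',P'] = [P,P'] = 0 identically. -/

import Mathlib

open scoped BigOperators

noncomputable def pd {m : ℕ} (μ : Fin m) (f : (Fin m → ℝ) → ℝ) (x : Fin m → ℝ) : ℝ :=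
  fderiv ℝ f x (Pi.single μ 1)

/-- Poisson bracket associated to a bivector field `P`. -/
noncomputable def pbrk {m : ℕ} (P : (Fin m → ℝ) → Fin m → Fin m → ℝ)
    (f g : (Fin m → ℝ) → ℝ) (x : Fin m → ℝ) : ℝ :=
  ∑ μ, ∑ ν, P x μ ν * pd μ f x * pd ν g x

/-- Schouten bracket `[P,P]^{λμν}`. -/
noncomputable def schouten {m : ℕ} (P : (Fin m → ℝ) → Fin m → Fin m → ℝ)
    (l μ ν : Fin m) (x : Fin m → ℝ) : ℝ :=
  ∑ ρ, (P x ρ l * pd ρ (fun y => P y μ ν) x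
      + P x ρ ν * pd ρ (fun y => P y l μ) x
      + P x ρ μ * pd ρ (fun y => P y ν l) x)

/-- Mixed Schouten bracket `[P,Q]^{λμν}`. -/
noncomputable def schoutenMixed {m : ℕ} (P Q : (Fin m → ℝ) → Fin m → Fin m → ℝ)
    (l μ ν : Fin m) (x : Fin m → ℝ) : ℝ :=
  ∑ ρ, (P x ρ l * pd ρ (fun y => Q y μ ν) x + Q x ρ l * pd ρ (fun y => P y μ ν) x
      + P x ρ ν * pd ρ (fun y => Q y l μ) x + Q x ρ ν * pd ρ (fun y => P y l μ) x
      + P x ρ μ * pd ρ (fun y => Q y ν l) x + Q x ρ μ * pd ρ (fun y => P y ν l) x)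

/-- The Poisson bivector `P` on the nilpotent group `A_{6,1}`. -/
noncomputable def P61 (p14 p23 p34 p36 p56 : ℝ) : (Fin 6 → ℝ) → Fin 6 → Fin 6 → ℝ :=
  fun x μ ν =>
    let C := p34 + p14 * x 1
    let D := -(p14 * x 4)
    !![0, 0, 0, p14, 0, 0;
       0, 0, p23, 0, 0, 0;
       0, -p23, 0, C, 0, p36;
       -p14, 0, -C, 0, 0, D;
       0, 0, 0, 0, 0, p56;
       0, 0, -p36, -D, -p56, 0] μ ν

/-- The Poisson bivector `P'` on the nilpotent group `A_{6,1}`. -/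
noncomputable def P61' (p14 p34 b32 c44 e65 : ℝ) : (Fin 6 → ℝ) → Fin 6 → Fin 6 → ℝ :=
  fun x μ ν =>
    let A := c44 * p14 * x 3 / p34
    let B := b32 * x 1
    let C := c44 * x 3 + c44 * p14 * x 1 * x 3 / p34
    let D := -(c44 * p14 * x 3 * x 4 / p34)
    let E := e65 * x 4
    !![0, 0, 0, A, 0, 0;
       0, 0, B, 0, 0, 0;
       0, -B, 0, C, 0, 0;
       -A, 0, -C, 0, 0, D;
       0, 0, 0, 0, 0, E;
       0, 0, 0, -D, -E, 0] μ ν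

/- ### Auxiliary machinery -/

@[simp] lemma vec6_0 {α : Type*} (a b c d e f : α) : ![a,b,c,d,e,f] 0 = a := rfl
@[simp] lemma vec6_1 {α : Type*} (a b c d e f : α) : ![a,b,c,d,e,f] 1 = b := rfl
@[simp] lemma vec6_2 {α : Type*} (a b c d e f : α) : ![a,b,c,d,e,f] 2 = c := rfl
@[simp] lemma vec6_3 {α : Type*} (a b c d e f : α) : ![a,b,c,d,e,f] 3 = d := rfl
@[simp] lemma vec6_4 {α : Type*} (a b c d e f : α) : ![a,b,c,d,e,f] 4 = e := rfl
@[simp] lemma vec6_5 {α : Type*} (a b c d e f : α) : ![a,b,c,d,e,f] 5 = f := rfl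
@[simp] lemma vec6_0' {α : Type*} (a b c d e f : α) (h : 0 < 6) : ![a,b,c,d,e,f] ⟨0,h⟩ = a := rfl
@[simp] lemma vec6_1' {α : Type*} (a b c d e f : α) (h : 1 < 6) : ![a,b,c,d,e,f] ⟨1,h⟩ = b := rfl
@[simp] lemma vec6_2' {α : Type*} (a b c d e f : α) (h : 2 < 6) : ![a,b,c,d,e,f] ⟨2,h⟩ = c := rfl
@[simp] lemma vec6_3' {α : Type*} (a b c d e f : α) (h : 3 < 6) : ![a,b,c,d,e,f] ⟨3,h⟩ = d := rfl
@[simp] lemma vec6_4' {α : Type*} (a b c d e f : α) (h : 4 < 6) : ![a,b,c,d,e,f] ⟨4,h⟩ = e := rfl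
@[simp] lemma vec6_5' {α : Type*} (a b c d e f : α) (h : 5 < 6) : ![a,b,c,d,e,f] ⟨5,h⟩ = f := rfl

/-- Kronecker delta coming from `Pi.single`. -/
noncomputable def dl (ρ i : Fin 6) : ℝ := (Pi.single ρ (1:ℝ) : Fin 6 → ℝ) i

lemma pd_poly (a b c d e g : ℝ) (ρ : Fin 6) (x : Fin 6 → ℝ) :
    pd ρ (fun y => a + b * y 1 + c * y 3 + d * y 4 + e * (y 1 * y 3) + g * (y 3 * y 4)) x
    = b * dl ρ 1 + c * dl ρ 3 + d * dl ρ 4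
      + e * (dl ρ 1 * x 3 + x 1 * dl ρ 3)
      + g * (dl ρ 3 * x 4 + x 3 * dl ρ 4) := by
  have h1 : HasFDerivAt (fun y : Fin 6 → ℝ => y 1)
      (ContinuousLinearMap.proj 1 : (Fin 6 → ℝ) →L[ℝ] ℝ) x :=
    (ContinuousLinearMap.proj 1 : (Fin 6 → ℝ) →L[ℝ] ℝ).hasFDerivAt
  have h3 : HasFDerivAt (fun y : Fin 6 → ℝ => y 3)
      (ContinuousLinearMap.proj 3 : (Fin 6 → ℝ) →L[ℝ] ℝ) x :=
    (ContinuousLinearMap.proj 3 : (Fin 6 → ℝ) →L[ℝ] ℝ).hasFDerivAt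
  have h4 : HasFDerivAt (fun y : Fin 6 → ℝ => y 4)
      (ContinuousLinearMap.proj 4 : (Fin 6 → ℝ) →L[ℝ] ℝ) x :=
    (ContinuousLinearMap.proj 4 : (Fin 6 → ℝ) →L[ℝ] ℝ).hasFDerivAt
  have H := (((((hasFDerivAt_const a x).add (h1.const_mul b)).add (h3.const_mul c)).add
      (h4.const_mul d)).add ((h1.mul h3).const_mul e)).add ((h3.mul h4).const_mul g)
  rw [pd, HasFDerivAt.fderiv (f := fun y : Fin 6 → ℝ => a + b * y 1 + c * y 3 + d * y 4 + e * (y 1 * y 3) + g * (y 3 * y 4)) H]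
  simp [dl, ContinuousLinearMap.proj_apply]
  ring

def K0 (p14 p23 p34 p36 p56 : ℝ) : Matrix (Fin 6) (Fin 6) ℝ :=
  !![0, 0, 0, p14, 0, 0;
     0, 0, p23, 0, 0, 0;
     0, -p23, 0, p34, 0, p36;
     -p14, 0, -p34, 0, 0, 0;
     0, 0, 0, 0, 0, p56;
     0, 0, -p36, 0, -p56, 0]

def K1 (p14 : ℝ) : Matrix (Fin 6) (Fin 6) ℝ :=
  !![0,0,0,0,0,0; 0,0,0,0,0,0; 0,0,0,p14,0,0; 0,0,-p14,0,0,0; 0,0,0,0,0,0; 0,0,0,0,0,0]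

def K4 (p14 : ℝ) : Matrix (Fin 6) (Fin 6) ℝ :=
  !![0,0,0,0,0,0; 0,0,0,0,0,0; 0,0,0,0,0,0; 0,0,0,0,0,-p14; 0,0,0,0,0,0; 0,0,0,p14,0,0]

lemma P61_decomp (p14 p23 p34 p36 p56 : ℝ) (x : Fin 6 → ℝ) (μ ν : Fin 6) :
    P61 p14 p23 p34 p36 p56 x μ ν =
      K0 p14 p23 p34 p36 p56 μ ν + K1 p14 μ ν * x 1 + 0 * x 3 + K4 p14 μ ν * x 4
        + 0 * (x 1 * x 3) + 0 * (x 3 * x 4) := by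
  fin_cases μ <;> fin_cases ν <;>
    simp only [P61, K0, K1, K4, Matrix.of_apply, vec6_0, vec6_1, vec6_2, vec6_3, vec6_4, vec6_5,
      vec6_0', vec6_1', vec6_2', vec6_3', vec6_4', vec6_5'] <;> ring

def L1 (b32 : ℝ) : Matrix (Fin 6) (Fin 6) ℝ :=
  !![0,0,0,0,0,0; 0,0,b32,0,0,0; 0,-b32,0,0,0,0; 0,0,0,0,0,0; 0,0,0,0,0,0; 0,0,0,0,0,0]

noncomputable def L3 (p14 p34 c44 : ℝ) : Matrix (Fin 6) (Fin 6) ℝ :=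
  !![0,0,0,c44*p14/p34,0,0; 0,0,0,0,0,0; 0,0,0,c44,0,0;
     -(c44*p14/p34),0,-c44,0,0,0; 0,0,0,0,0,0; 0,0,0,0,0,0]

def L4 (e65 : ℝ) : Matrix (Fin 6) (Fin 6) ℝ :=
  !![0,0,0,0,0,0; 0,0,0,0,0,0; 0,0,0,0,0,0; 0,0,0,0,0,0; 0,0,0,0,0,e65; 0,0,0,0,-e65,0]

noncomputable def L13 (p14 p34 c44 : ℝ) : Matrix (Fin 6) (Fin 6) ℝ :=
  !![0,0,0,0,0,0; 0,0,0,0,0,0; 0,0,0,c44*p14/p34,0,0;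
     0,0,-(c44*p14/p34),0,0,0; 0,0,0,0,0,0; 0,0,0,0,0,0]

noncomputable def L34 (p14 p34 c44 : ℝ) : Matrix (Fin 6) (Fin 6) ℝ :=
  !![0,0,0,0,0,0; 0,0,0,0,0,0; 0,0,0,0,0,0;
     0,0,0,0,0,-(c44*p14/p34); 0,0,0,0,0,0; 0,0,0,c44*p14/p34,0,0]

lemma P61'_decomp (p14 p34 b32 c44 e65 : ℝ) (x : Fin 6 → ℝ) (μ ν : Fin 6) :
    P61' p14 p34 b32 c44 e65 x μ ν =
      0 + L1 b32 μ ν * x 1 + L3 p14 p34 c44 μ ν * x 3 + L4 e65 μ ν * x 4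
        + L13 p14 p34 c44 μ ν * (x 1 * x 3) + L34 p14 p34 c44 μ ν * (x 3 * x 4) := by
  fin_cases μ <;> fin_cases ν <;>
    simp only [P61', L1, L3, L4, L13, L34, Matrix.of_apply,
      vec6_0, vec6_1, vec6_2, vec6_3, vec6_4, vec6_5,
      vec6_0', vec6_1', vec6_2', vec6_3', vec6_4', vec6_5'] <;> ring

lemma pd_P61 (p14 p23 p34 p36 p56 : ℝ) (ρ μ ν : Fin 6) (x : Fin 6 → ℝ) :
    pd ρ (fun y => P61 p14 p23 p34 p36 p56 y μ ν) x
      = K1 p14 μ ν * dl ρ 1 + K4 p14 μ ν * dl ρ 4 := by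
  have h : (fun y => P61 p14 p23 p34 p36 p56 y μ ν)
      = fun y => K0 p14 p23 p34 p36 p56 μ ν + K1 p14 μ ν * y 1 + 0 * y 3 + K4 p14 μ ν * y 4
          + 0 * (y 1 * y 3) + 0 * (y 3 * y 4) :=
    funext fun y => P61_decomp p14 p23 p34 p36 p56 y μ ν
  rw [h, pd_poly]; ring

lemma pd_P61' (p14 p34 b32 c44 e65 : ℝ) (ρ μ ν : Fin 6) (x : Fin 6 → ℝ) :
    pd ρ (fun y => P61' p14 p34 b32 c44 e65 y μ ν) x
      = L1 b32 μ ν * dl ρ 1 + L3 p14 p34 c44 μ ν * dl ρ 3 + L4 e65 μ ν * dl ρ 4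
        + L13 p14 p34 c44 μ ν * (dl ρ 1 * x 3 + x 1 * dl ρ 3)
        + L34 p14 p34 c44 μ ν * (dl ρ 3 * x 4 + x 3 * dl ρ 4) := by
  have h : (fun y => P61' p14 p34 b32 c44 e65 y μ ν)
      = fun y => 0 + L1 b32 μ ν * y 1 + L3 p14 p34 c44 μ ν * y 3 + L4 e65 μ ν * y 4
          + L13 p14 p34 c44 μ ν * (y 1 * y 3) + L34 p14 p34 c44 μ ν * (y 3 * y 4) :=
    funext fun y => P61'_decomp p14 p34 b32 c44 e65 y μ ν
  rw [h, pd_poly]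

@[simp] lemma dl_00 : dl 0 0 = 1 := by simp [dl, Pi.single_apply]
@[simp] lemma dl_01 : dl 0 1 = 0 := by simp [dl, Pi.single_apply]
@[simp] lemma dl_02 : dl 0 2 = 0 := by simp [dl, Pi.single_apply]
@[simp] lemma dl_03 : dl 0 3 = 0 := by simp [dl, Pi.single_apply]
@[simp] lemma dl_04 : dl 0 4 = 0 := by simp [dl, Pi.single_apply]
@[simp] lemma dl_05 : dl 0 5 = 0 := by simp [dl, Pi.single_apply]
@[simp] lemma dl_10 : dl 1 0 = 0 := by simp [dl, Pi.single_apply]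
@[simp] lemma dl_11 : dl 1 1 = 1 := by simp [dl, Pi.single_apply]
@[simp] lemma dl_12 : dl 1 2 = 0 := by simp [dl, Pi.single_apply]
@[simp] lemma dl_13 : dl 1 3 = 0 := by simp [dl, Pi.single_apply]
@[simp] lemma dl_14 : dl 1 4 = 0 := by simp [dl, Pi.single_apply]
@[simp] lemma dl_15 : dl 1 5 = 0 := by simp [dl, Pi.single_apply]
@[simp] lemma dl_20 : dl 2 0 = 0 := by simp [dl, Pi.single_apply]
@[simp] lemma dl_21 : dl 2 1 = 0 := by simp [dl, Pi.single_apply]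
@[simp] lemma dl_22 : dl 2 2 = 1 := by simp [dl, Pi.single_apply]
@[simp] lemma dl_23 : dl 2 3 = 0 := by simp [dl, Pi.single_apply]
@[simp] lemma dl_24 : dl 2 4 = 0 := by simp [dl, Pi.single_apply]
@[simp] lemma dl_25 : dl 2 5 = 0 := by simp [dl, Pi.single_apply]
@[simp] lemma dl_30 : dl 3 0 = 0 := by simp [dl, Pi.single_apply]
@[simp] lemma dl_31 : dl 3 1 = 0 := by simp [dl, Pi.single_apply]
@[simp] lemma dl_32 : dl 3 2 = 0 := by simp [dl, Pi.single_apply]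
@[simp] lemma dl_33 : dl 3 3 = 1 := by simp [dl, Pi.single_apply]
@[simp] lemma dl_34 : dl 3 4 = 0 := by simp [dl, Pi.single_apply]
@[simp] lemma dl_35 : dl 3 5 = 0 := by simp [dl, Pi.single_apply]
@[simp] lemma dl_40 : dl 4 0 = 0 := by simp [dl, Pi.single_apply]
@[simp] lemma dl_41 : dl 4 1 = 0 := by simp [dl, Pi.single_apply]
@[simp] lemma dl_42 : dl 4 2 = 0 := by simp [dl, Pi.single_apply]
@[simp] lemma dl_43 : dl 4 3 = 0 := by simp [dl, Pi.single_apply]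
@[simp] lemma dl_44 : dl 4 4 = 1 := by simp [dl, Pi.single_apply]
@[simp] lemma dl_45 : dl 4 5 = 0 := by simp [dl, Pi.single_apply]
@[simp] lemma dl_50 : dl 5 0 = 0 := by simp [dl, Pi.single_apply]
@[simp] lemma dl_51 : dl 5 1 = 0 := by simp [dl, Pi.single_apply]
@[simp] lemma dl_52 : dl 5 2 = 0 := by simp [dl, Pi.single_apply]
@[simp] lemma dl_53 : dl 5 3 = 0 := by simp [dl, Pi.single_apply]
@[simp] lemma dl_54 : dl 5 4 = 0 := by simp [dl, Pi.single_apply]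
@[simp] lemma dl_55 : dl 5 5 = 1 := by simp [dl, Pi.single_apply]
@[simp] lemma dl_self (ρ : Fin 6) : dl ρ ρ = 1 := by simp [dl]
@[simp] lemma dl_ne (ρ i : Fin 6) (h : ρ ≠ i) : dl ρ i = 0 := by
  simp [dl, Pi.single_apply, (Ne.symm h)]

set_option maxHeartbeats 8000000 in
theorem A61_compatible (p14 p23 p34 p36 p56 b32 c44 e65 : ℝ) (h34 : p34 ≠ 0) :
    (∀ x l μ ν, schouten (P61 p14 p23 p34 p36 p56) l μ ν x = 0) ∧
    (∀ x l μ ν, schouten (P61' p14 p34 b32 c44 e65) l μ ν x = 0) ∧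
    (∀ x l μ ν, schoutenMixed (P61 p14 p23 p34 p36 p56)
        (P61' p14 p34 b32 c44 e65) l μ ν x = 0) := by
  refine ⟨?_, ?_, ?_⟩ <;> intro x l μ ν
  · simp only [schouten, Fin.sum_univ_six, pd_P61]
    simp only [dl_00, dl_01, dl_02, dl_03, dl_04, dl_05, dl_10, dl_11, dl_12, dl_13, dl_14, dl_15, dl_20, dl_21, dl_22, dl_23, dl_24, dl_25, dl_30, dl_31, dl_32, dl_33, dl_34, dl_35, dl_40, dl_41, dl_42, dl_43, dl_44, dl_45, dl_50, dl_51, dl_52, dl_53, dl_54, dl_55, mul_zero, mul_one, zero_add, add_zero, zero_mul]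
    fin_cases l <;> fin_cases μ <;> fin_cases ν <;>
      simp only [P61, K1, K4, Matrix.of_apply, vec6_0, vec6_1, vec6_2, vec6_3, vec6_4, vec6_5, vec6_0', vec6_1', vec6_2', vec6_3', vec6_4', vec6_5'] <;> ring
  · simp only [schouten, Fin.sum_univ_six, pd_P61']
    simp only [dl_00, dl_01, dl_02, dl_03, dl_04, dl_05, dl_10, dl_11, dl_12, dl_13, dl_14, dl_15, dl_20, dl_21, dl_22, dl_23, dl_24, dl_25, dl_30, dl_31, dl_32, dl_33, dl_34, dl_35, dl_40, dl_41, dl_42, dl_43, dl_44, dl_45, dl_50, dl_51, dl_52, dl_53, dl_54, dl_55, mul_zero, mul_one, zero_add, add_zero, zero_mul]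
    fin_cases l <;> fin_cases μ <;> fin_cases ν <;>
      simp only [P61', L1, L3, L4, L13, L34, Matrix.of_apply, vec6_0, vec6_1, vec6_2, vec6_3, vec6_4, vec6_5, vec6_0', vec6_1', vec6_2', vec6_3', vec6_4', vec6_5'] <;> ring
  · simp only [schoutenMixed, Fin.sum_univ_six, pd_P61, pd_P61']
    simp only [dl_00, dl_01, dl_02, dl_03, dl_04, dl_05, dl_10, dl_11, dl_12, dl_13, dl_14, dl_15, dl_20, dl_21, dl_22, dl_23, dl_24, dl_25, dl_30, dl_31, dl_32, dl_33, dl_34, dl_35, dl_40, dl_41, dl_42, dl_43, dl_44, dl_45, dl_50, dl_51, dl_52, dl_53, dl_54, dl_55, mul_zero, mul_one, zero_add, add_zero, zero_mul]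
    fin_cases l <;> fin_cases μ <;> fin_cases ν <;>
      simp only [P61, P61', K1, K4, L1, L3, L4, L13, L34, Matrix.of_apply, vec6_0, vec6_1, vec6_2, vec6_3, vec6_4, vec6_5, vec6_0', vec6_1', vec6_2', vec6_3', vec6_4', vec6_5'] <;>
      field_simp <;> ring
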